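/- For every t ≥ 3 and n ≥ 3, there exists a balanced t-coloring of C_t^n with no rainbow combinatorial line. -/

import Mathlib

/-- A geometric line in the `n`-cube over `t` elements: a sequence of `t`
distinct points such that in each coordinate `j`, either all points agree,
or the `j`-th coordinate of the `i`-th point is `i`, or is `t-1-i`. -/
def IsGeomLine (t n : ℕ) (ℓ : Fin t → Fin n → Fin t) : Prop :=
  Function.Injective ℓ ∧
    ∀ j : Fin n,
      (∀ i i' : Fin t, ℓ i j = ℓ i' j) ∨
      (∀ i : Fin t, (ℓ i j : ℕ) = (i : ℕ)) ∨
      (∀ i : Fin t, (ℓ i j : ℕ) = t - 1 - (i : ℕ))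
/-- A combinatorial line in the `n`-cube over `t` elements: a sequence of `t`
distinct points such that in each coordinate `j`, either all points agree or
the `j`-th coordinate of the `i`-th point is `i`, the latter holding in at
least one coordinate. -/
def IsCombLine (t n : ℕ) (ℓ : Fin t → Fin n → Fin t) : Prop :=
  Function.Injective ℓ ∧
    (∀ j : Fin n,
      (∀ i i' : Fin t, ℓ i j = ℓ i' j) ∨
      (∀ i : Fin t, (ℓ i j : ℕ) = (i : ℕ))) ∧
    (∃ j : Fin n, ∀ i : Fin t, (ℓ i j : ℕ) = (i : ℕ))

open Fin.CommRing

namespace Stmt18Aux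

variable {k : ℕ}

/-- The coloring kernel: `H u v = u + v` except on the diagonal where
`H u u = 2u + 2`. -/
def Hf (u v : Fin (k + 3)) : Fin (k + 3) := if u = v then 2 * u + 2 else u + v

/-- Witness function: together with `Hf`, the pair `(Hf, Wf)` is a bijection
of `(Fin (k+3))²` with itself, with inverse built from `Psi`. -/
def Wf (u v : Fin (k + 3)) : Fin (k + 3) := if u = v then u + 1 else u

/-- Inverse of `(Hf, Wf)`. -/
def Psi (c w : Fin (k + 3)) : Fin (k + 3) × Fin (k + 3) :=
  if 2 * w = c then (w - 1, w - 1) else (w, c - w)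

lemma Hf_diag (u : Fin (k + 3)) : Hf u u = 2 * u + 2 := if_pos rfl

lemma Hf_off {u v : Fin (k + 3)} (h : u ≠ v) : Hf u v = u + v := if_neg h

lemma Wf_diag (u : Fin (k + 3)) : Wf u u = u + 1 := if_pos rfl

lemma Wf_off {u v : Fin (k + 3)} (h : u ≠ v) : Wf u v = u := if_neg h

lemma two_ne_zero' : (2 : Fin (k + 3)) ≠ 0 := by
  intro h
  have h2 := congrArg Fin.val h
  rw [Fin.val_two, Fin.val_zero] at h2
  exact absurd h2 (by omega)

lemma one_ne_zero' : (1 : Fin (k + 3)) ≠ 0 := by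
  intro h
  have h2 := congrArg Fin.val h
  rw [Fin.val_one, Fin.val_zero] at h2
  exact absurd h2 (by omega)

/-- If `a` differs from `d` by `1` or `2`, then `a ≠ d`. -/
lemma offset_ne {d a b : Fin (k + 3)} (hb : b = d)
    (h1 : a - b = 1 ∨ a - b = 2) : a ≠ d := by
  intro ha
  rcases h1 with h | h
  · exact one_ne_zero' (by rw [← h, ha, hb, sub_self])
  · exact two_ne_zero' (by rw [← h, ha, hb, sub_self])

lemma ne_of_eq_sub {c w : Fin (k + 3)} (h : 2 * w ≠ c) : w ≠ c - w := by
  intro he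
  apply h
  calc 2 * w = w + (c - w) := by rw [← he]; ring
    _ = c := by ring

lemma H_Psi (c w : Fin (k + 3)) : Hf (Psi c w).1 (Psi c w).2 = c := by
  unfold Psi
  split_ifs with h
  · show Hf (w - 1) (w - 1) = c
    rw [Hf_diag, ← h]; ring
  · show Hf w (c - w) = c
    rw [Hf_off (ne_of_eq_sub h)]; ring

lemma W_Psi (c w : Fin (k + 3)) : Wf (Psi c w).1 (Psi c w).2 = w := by
  unfold Psi
  split_ifs with h
  · show Wf (w - 1) (w - 1) = w
    rw [Wf_diag]; ring
  · show Wf w (c - w) = w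
    rw [Wf_off (ne_of_eq_sub h)]

lemma Psi_H_W (u v : Fin (k + 3)) : Psi (Hf u v) (Wf u v) = (u, v) := by
  by_cases h : u = v
  · subst h
    rw [Hf_diag, Wf_diag]
    unfold Psi
    rw [if_pos (by ring : 2 * (u + 1) = 2 * u + 2)]
    have h1 : u + 1 - 1 = u := by ring
    rw [h1]
  · rw [Hf_off h, Wf_off h]
    unfold Psi
    rw [if_neg (fun hc : 2 * u = u + v => h (by
      calc u = 2 * u - u := by ring
        _ = v := by rw [hc]; ring))]
    have h1 : u + v - u = v := by ring
    rw [h1]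

/-- Two distinct elements avoiding the equation `2*u = d`. -/
lemma exists_pair (d : Fin (k + 3)) :
    ∃ u1 u2 : Fin (k + 3), u1 ≠ u2 ∧ 2 * u1 ≠ d ∧ 2 * u2 ≠ d := by
  by_cases h0 : 2 * 0 = d
  · by_cases h1 : 2 * 2 = d
    · exact ⟨1, 3, Ne.symm (offset_ne rfl (Or.inr (by ring))),
        offset_ne h0 (Or.inr (by ring)), offset_ne h1 (Or.inr (by ring))⟩
    · exact ⟨1, 2, Ne.symm (offset_ne rfl (Or.inl (by ring))),
        offset_ne h0 (Or.inr (by ring)), h1⟩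
  · by_cases h1 : 2 * 1 = d
    · exact ⟨0, 2, Ne.symm (offset_ne rfl (Or.inr (by ring))),
        h0, offset_ne h1 (Or.inr (by ring))⟩
    · exact ⟨0, 1, Ne.symm (offset_ne rfl (Or.inl (by ring))), h0, h1⟩

end Stmt18Aux

open Stmt18Aux in
/-- For every `t ≥ 3` and `n ≥ 3`, there exists a balanced `t`-coloring of
`C_t^n` (each color class of size `t^(n-1)`) with no rainbow combinatorial
line. -/
theorem stmt18 (t n : ℕ) (ht : 3 ≤ t) (hn : 3 ≤ n) :
    ∃ f : (Fin n → Fin t) → Fin t,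
      (∀ c : Fin t,
        (Finset.univ.filter (fun x => f x = c)).card = t ^ (n - 1)) ∧
      (∀ ℓ : Fin t → Fin n → Fin t, IsCombLine t n ℓ →
        ¬ Function.Injective (f ∘ ℓ)) := by
  obtain ⟨k, rfl⟩ : ∃ k, t = k + 3 := ⟨t - 3, by omega⟩
  set j0 : Fin n := ⟨0, by omega⟩ with hj0
  set j1 : Fin n := ⟨1, by omega⟩ with hj1
  set j2 : Fin n := ⟨2, by omega⟩ with hj2
  have hj01 : j0 ≠ j1 := by simp [hj0, hj1, Fin.ext_iff]
  have hj02 : j0 ≠ j2 := by simp [hj0, hj2, Fin.ext_iff]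
  have hj12 : j1 ≠ j2 := by simp [hj1, hj2, Fin.ext_iff]
  refine ⟨fun x => Hf (x j0 - x j1) (x j1 - x j2), ?_, ?_⟩
  · -- balance
    intro c
    set f : (Fin n → Fin (k + 3)) → Fin (k + 3) :=
      fun x => Hf (x j0 - x j1) (x j1 - x j2) with hf
    set E : (Fin n → Fin (k + 3)) → (Fin n → Fin (k + 3)) :=
      fun y j => if j = j0 then (Psi (y j0) (y j2)).1 + y j1
        else if j = j2 then y j1 - (Psi (y j0) (y j2)).2 else y j with hE
    set E' : (Fin n → Fin (k + 3)) → (Fin n → Fin (k + 3)) :=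
      fun x j => if j = j0 then f x
        else if j = j2 then Wf (x j0 - x j1) (x j1 - x j2) else x j with hE'
    have hE'j0 : ∀ x, E' x j0 = f x := fun x => by simp [hE']
    have hE'j1 : ∀ x, E' x j1 = x j1 := fun x => by
      simp [hE', Ne.symm hj01, hj12]
    have hE'j2 : ∀ x, E' x j2 = Wf (x j0 - x j1) (x j1 - x j2) := fun x => by
      simp [hE', Ne.symm hj02]
    have hEj0 : ∀ y, E y j0 = (Psi (y j0) (y j2)).1 + y j1 := fun y => by simp [hE]
    have hEj1 : ∀ y, E y j1 = y j1 := fun y => by simp [hE, Ne.symm hj01, hj12]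
    have hEj2 : ∀ y, E y j2 = y j1 - (Psi (y j0) (y j2)).2 := fun y => by
      simp [hE, Ne.symm hj02]
    have hfE : ∀ y, f (E y) = y j0 := by
      intro y
      show Hf (E y j0 - E y j1) (E y j1 - E y j2) = y j0
      rw [hEj0, hEj1, hEj2]
      have h3 : (Psi (y j0) (y j2)).1 + y j1 - y j1 = (Psi (y j0) (y j2)).1 := by ring
      have h4 : y j1 - (y j1 - (Psi (y j0) (y j2)).2) = (Psi (y j0) (y j2)).2 := by ring
      rw [h3, h4]
      exact H_Psi (y j0) (y j2)
    have hEE' : ∀ x, E (E' x) = x := by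
      intro x
      funext j
      by_cases h : j = j0
      · subst h
        rw [hEj0, hE'j0, hE'j1, hE'j2]
        show (Psi (f x) (Wf (x j0 - x j1) (x j1 - x j2))).1 + x j1 = x j0
        rw [hf]
        show (Psi (Hf (x j0 - x j1) (x j1 - x j2))
          (Wf (x j0 - x j1) (x j1 - x j2))).1 + x j1 = x j0
        rw [Psi_H_W]
        ring
      · by_cases h2 : j = j2
        · subst h2
          rw [hEj2, hE'j1, hE'j0, hE'j2]
          show x j1 - (Psi (f x) (Wf (x j0 - x j1) (x j1 - x j2))).2 = x j2
          rw [hf]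
          show x j1 - (Psi (Hf (x j0 - x j1) (x j1 - x j2))
            (Wf (x j0 - x j1) (x j1 - x j2))).2 = x j2
          rw [Psi_H_W]
          ring
        · simp [hE, hE', h, h2]
    have hE'E : ∀ y, E' (E y) = y := by
      intro y
      funext j
      by_cases h : j = j0
      · subst h
        rw [hE'j0, hfE]
      · by_cases h2 : j = j2
        · subst h2
          rw [hE'j2, hEj0, hEj1, hEj2]
          have h3 : (Psi (y j0) (y j2)).1 + y j1 - y j1 = (Psi (y j0) (y j2)).1 := by
            ring
          have h4 : y j1 - (y j1 - (Psi (y j0) (y j2)).2) = (Psi (y j0) (y j2)).2 := by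
            ring
          rw [h3, h4]
          exact W_Psi (y j0) (y j2)
        · simp [hE, hE', h, h2]
    have hcard : (Finset.univ.filter (fun x => f x = c)).card
        = (Finset.univ.filter (fun y : Fin n → Fin (k + 3) => y j0 = c)).card := by
      refine Finset.card_bij' (fun x _ => E' x) (fun y _ => E y) ?_ ?_ ?_ ?_
      · intro x hx
        rw [Finset.mem_filter] at hx ⊢
        refine ⟨Finset.mem_univ _, ?_⟩
        show E' x j0 = c
        rw [hE'j0, hx.2]
      · intro y hy
        rw [Finset.mem_filter] at hy ⊢
        refine ⟨Finset.mem_univ _, ?_⟩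
        show f (E y) = c
        rw [hfE, hy.2]
      · intro x _
        show E (E' x) = x
        exact hEE' x
      · intro y _
        show E' (E y) = y
        exact hE'E y
    rw [hcard, ← Fintype.card_subtype]
    have e3 : {y : Fin n → Fin (k + 3) // y j0 = c}
        ≃ ({j : Fin n // j ≠ j0} → Fin (k + 3)) :=
      { toFun := fun y j => y.1 j.1
        invFun := fun g => ⟨fun j => if h : j = j0 then c else g ⟨j, h⟩, by simp⟩
        left_inv := fun y => Subtype.ext (funext fun j => by
          by_cases h : j = j0
          · subst h; simp [y.2]
          · simp [h])
        right_inv := fun g => funext fun j => by simp [j.2] }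
    rw [Fintype.card_congr e3, Fintype.card_fun]
    congr 1
    · exact Fintype.card_fin _
    · rw [Fintype.card_subtype_compl, Fintype.card_subtype_eq, Fintype.card_fin]
  · -- no rainbow line
    rintro ℓ ⟨-, hcols, -⟩ hinj
    have mv : ∀ j : Fin n, (∀ i : Fin (k+3), (ℓ i j : ℕ) = (i : ℕ)) →
        ∀ i, ℓ i j = i := fun j h i => Fin.ext (h i)
    have key : ∀ i i' : Fin (k + 3),
        Hf (ℓ i j0 - ℓ i j1) (ℓ i j1 - ℓ i j2)
          = Hf (ℓ i' j0 - ℓ i' j1) (ℓ i' j1 - ℓ i' j2) → i = i' := by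
      intro i i' h
      exact hinj h
    clear hinj
    rcases hcols j0 with h0 | h0 <;> rcases hcols j1 with h1 | h1 <;>
      rcases hcols j2 with h2 | h2
    -- Case CCC: all constant
    · obtain ⟨A, hA⟩ : ∃ A, ∀ i, ℓ i j0 = A := ⟨ℓ 0 j0, fun i => h0 i 0⟩
      obtain ⟨B, hB⟩ : ∃ B, ∀ i, ℓ i j1 = B := ⟨ℓ 0 j1, fun i => h1 i 0⟩
      obtain ⟨C, hC⟩ : ∃ C, ∀ i, ℓ i j2 = C := ⟨ℓ 0 j2, fun i => h2 i 0⟩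
      have h01 : (0 : Fin (k+3)) = 1 :=
        key 0 1 (by rw [hA 0, hA 1, hB 0, hB 1, hC 0, hC 1])
      exact (Ne.symm (offset_ne rfl (Or.inl (by ring)))) h01
    -- Case CCM: j0, j1 const, j2 moving
    · obtain ⟨A, hA⟩ : ∃ A, ∀ i, ℓ i j0 = A := ⟨ℓ 0 j0, fun i => h0 i 0⟩
      obtain ⟨B, hB⟩ : ∃ B, ∀ i, ℓ i j1 = B := ⟨ℓ 0 j1, fun i => h1 i 0⟩
      replace h2 := mv j2 h2
      set u : Fin (k+3) := A - B with hu
      have hne2 : u ≠ u + 2 := Ne.symm (offset_ne rfl (Or.inr (by ring)))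
      have heq := key (B - u) (B - (u + 2)) ?_
      · exact hne2 (sub_right_injective heq)
      · rw [hA (B - u), hA (B - (u+2)), hB (B - u), hB (B - (u+2)),
          h2 (B - u), h2 (B - (u+2)), ← hu]
        have h3 : B - (B - u) = u := by ring
        have h4 : B - (B - (u + 2)) = u + 2 := by ring
        rw [h3, h4, Hf_diag, Hf_off hne2]
        ring
    -- Case CMC: j0, j2 const, j1 moving
    · obtain ⟨A, hA⟩ : ∃ A, ∀ i, ℓ i j0 = A := ⟨ℓ 0 j0, fun i => h0 i 0⟩
      obtain ⟨C, hC⟩ : ∃ C, ∀ i, ℓ i j2 = C := ⟨ℓ 0 j2, fun i => h2 i 0⟩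
      replace h1 := mv j1 h1
      obtain ⟨u1, u2, hne, hd1, hd2⟩ := exists_pair (A - C)
      have val : ∀ u : Fin (k+3), 2 * u ≠ A - C →
          Hf (A - (A - u)) ((A - u) - C) = A - C := by
        intro u huu
        have h3 : A - (A - u) = u := by ring
        have h4 : (A - u) - C = (A - C) - u := by ring
        rw [h3, h4, Hf_off (ne_of_eq_sub huu)]
        ring
      have heq := key (A - u1) (A - u2) ?_
      · exact hne (sub_right_injective heq)
      · rw [hA (A - u1), hA (A - u2), hC (A - u1), hC (A - u2),
          h1 (A - u1), h1 (A - u2), val u1 hd1, val u2 hd2]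
    -- Case CMM: j0 const, j1, j2 moving
    · obtain ⟨A, hA⟩ : ∃ A, ∀ i, ℓ i j0 = A := ⟨ℓ 0 j0, fun i => h0 i 0⟩
      replace h1 := mv j1 h1
      replace h2 := mv j2 h2
      have h02 : (0 : Fin (k+3)) ≠ 2 := Ne.symm (offset_ne rfl (Or.inr (by ring)))
      have heq := key (A - 0) (A - 2) ?_
      · exact h02 (sub_right_injective heq)
      · rw [hA (A - 0), hA (A - 2), h1 (A - 0), h1 (A - 2), h2 (A - 0), h2 (A - 2)]
        have h3 : A - (A - 0) = 0 := by ring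
        have h4 : (A - 0) - (A - 0) = (0 : Fin (k+3)) := by ring
        have h5 : A - (A - 2) = 2 := by ring
        have h6 : (A - 2) - (A - 2) = (0 : Fin (k+3)) := by ring
        rw [h3, h4, h5, h6, Hf_diag, Hf_off (fun h => two_ne_zero' h)]
        ring
    -- Case MCC: j0 moving, j1, j2 const
    · obtain ⟨B, hB⟩ : ∃ B, ∀ i, ℓ i j1 = B := ⟨ℓ 0 j1, fun i => h1 i 0⟩
      obtain ⟨C, hC⟩ : ∃ C, ∀ i, ℓ i j2 = C := ⟨ℓ 0 j2, fun i => h2 i 0⟩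
      replace h0 := mv j0 h0
      set v : Fin (k+3) := B - C with hv
      have hne2 : v ≠ v + 2 := Ne.symm (offset_ne rfl (Or.inr (by ring)))
      have heq := key (v + B) (v + 2 + B) ?_
      · have h5 := add_right_cancel heq
        exact hne2 h5
      · rw [h0 (v + B), h0 (v + 2 + B), hB (v + B), hB (v + 2 + B),
          hC (v + B), hC (v + 2 + B), ← hv]
        have h3 : (v + B) - B = v := by ring
        have h4 : (v + 2 + B) - B = v + 2 := by ring
        rw [h3, h4, Hf_diag, Hf_off (offset_ne rfl (Or.inr (by ring)) : v + 2 ≠ v)]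
        ring
    -- Case MCM: j0, j2 moving, j1 const
    · obtain ⟨B, hB⟩ : ∃ B, ∀ i, ℓ i j1 = B := ⟨ℓ 0 j1, fun i => h1 i 0⟩
      replace h0 := mv j0 h0
      replace h2 := mv j2 h2
      obtain ⟨u1, u2, hne, hd1, hd2⟩ := exists_pair (0 : Fin (k+3))
      have val : ∀ u : Fin (k+3), 2 * u ≠ 0 →
          Hf ((u + B) - B) (B - (u + B)) = 0 := by
        intro u huu
        have h3 : (u + B) - B = u := by ring
        have h4 : B - (u + B) = 0 - u := by ring
        rw [h3, h4, Hf_off (ne_of_eq_sub huu)]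
        ring
      have heq := key (u1 + B) (u2 + B) ?_
      · exact hne (add_right_cancel heq)
      · rw [h0 (u1 + B), h0 (u2 + B), hB (u1 + B), hB (u2 + B),
          h2 (u1 + B), h2 (u2 + B), val u1 hd1, val u2 hd2]
    -- Case MMC: j0, j1 moving, j2 const
    · obtain ⟨C, hC⟩ : ∃ C, ∀ i, ℓ i j2 = C := ⟨ℓ 0 j2, fun i => h2 i 0⟩
      replace h0 := mv j0 h0
      replace h1 := mv j1 h1
      have h02 : (0 : Fin (k+3)) ≠ 2 := Ne.symm (offset_ne rfl (Or.inr (by ring)))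
      have hne2 : C ≠ C + 2 := Ne.symm (offset_ne rfl (Or.inr (by ring)))
      have heq := key C (C + 2) ?_
      · exact hne2 heq
      · rw [h0 C, h0 (C + 2), h1 C, h1 (C + 2), hC C, hC (C + 2)]
        have h3 : C - C = (0 : Fin (k+3)) := by ring
        have h4 : (C + 2) - (C + 2) = (0 : Fin (k+3)) := by ring
        have h5 : (C + 2) - C = (2 : Fin (k+3)) := by ring
        rw [h3, h4, h5, Hf_diag, Hf_off h02]
        ring
    -- Case MMM: all moving
    · replace h0 := mv j0 h0
      replace h1 := mv j1 h1
      replace h2 := mv j2 h2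
      have h01 : (0 : Fin (k+3)) ≠ 1 := Ne.symm (offset_ne rfl (Or.inl (by ring)))
      have heq := key 0 1 ?_
      · exact h01 heq
      · rw [h0 0, h0 1, h1 0, h1 1, h2 0, h2 1]
        have h3 : (0 : Fin (k+3)) - 0 = 0 := by ring
        have h4 : (1 : Fin (k+3)) - 1 = 0 := by ring
        rw [h3, h4]
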